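/- For every integer k ≥ 1 there is a threshold N_0 such that for all N ≥ N_0 the following holds: there exist pairwise disjoint finite sets P_1, P_2, …, P_k of primes, each contained in the interval (log_4 N, (1/2) log_3 N], such that for every 1 ≤ i ≤ k one has 4 i log 2 ≤ log 2 + Σ_{p ∈ P_i} log(p/(p−1)) ≤ (4 i + 1) log 2. -/

import Mathlib

open Real Finset Filter


noncomputable def pw (p : ℕ) : ℝ := Real.log ((p : ℝ) / ((p : ℝ) - 1))

lemma pw_facts {p : ℕ} (hp : 2 ≤ p) :
    0 < pw p ∧ pw p ≤ Real.log 2 ∧ pw p ≤ 2 * (p : ℝ)⁻¹ ∧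
      pw p = Real.log ((1 - (p : ℝ)⁻¹)⁻¹) := by
  have hp1 : (2 : ℝ) ≤ p := by exact_mod_cast hp
  have h0 : (0 : ℝ) < (p : ℝ) - 1 := by linarith
  have h1 : (1 : ℝ) < (p : ℝ) / ((p : ℝ) - 1) := by
    rw [lt_div_iff₀ h0]; linarith
  refine ⟨Real.log_pos h1, ?_, ?_, ?_⟩
  · apply Real.log_le_log (by linarith)
    rw [div_le_iff₀ h0]; linarith
  · have hle := Real.log_le_sub_one_of_pos (x := (p : ℝ) / ((p : ℝ) - 1)) (by linarith)
    have h2 : (p : ℝ) / ((p : ℝ) - 1) - 1 = ((p : ℝ) - 1)⁻¹ := by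
      field_simp
      ring
    have h3 : ((p : ℝ) - 1)⁻¹ ≤ 2 * (p : ℝ)⁻¹ := by
      rw [inv_eq_one_div, inv_eq_one_div, mul_one_div, div_le_div_iff₀ h0 (by linarith)]
      linarith
    calc pw p ≤ (p : ℝ) / ((p : ℝ) - 1) - 1 := hle
      _ = ((p : ℝ) - 1)⁻¹ := h2
      _ ≤ 2 * (p : ℝ)⁻¹ := h3
  · have h4 : (1 - (p:ℝ)⁻¹) = ((p:ℝ)-1)/p := by field_simp
    rw [pw, h4, inv_div]

noncomputable def invHom : ℕ →* ℝ where
  toFun n := (n : ℝ)⁻¹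
  map_one' := by norm_num
  map_mul' a b := by push_cast; rw [mul_inv]

lemma euler_lower (n : ℕ) (hn : 1 ≤ n) :
    Real.log (Real.log ((n : ℝ) + 1)) ≤ ∑ p ∈ (n + 1).primesBelow, pw p := by
  have hnorm : ∀ {p : ℕ}, p.Prime → ‖invHom p‖ < 1 := by
    intro p hp
    have : (1 : ℝ) < p := by exact_mod_cast hp.one_lt
    rw [invHom]; simp only [MonoidHom.coe_mk, OneHom.coe_mk]
    rw [norm_inv, Real.norm_natCast]
    rw [inv_lt_one_iff₀]; right; exact this
  obtain ⟨-, hs⟩ :=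
    EulerProduct.summable_and_hasSum_smoothNumbers_prod_primesBelow_geometric
      (f := invHom) hnorm (n + 1)
  have hs2 : HasSum (Set.indicator (Nat.smoothNumbers (n+1)) (fun m => invHom m))
      (∏ p ∈ (n + 1).primesBelow, (1 - invHom p)⁻¹) := hasSum_subtype_iff_indicator.mp hs
  have hsum_le :
      ∑ d ∈ Finset.Icc 1 n, Set.indicator (Nat.smoothNumbers (n+1)) (fun m => invHom m) d ≤
        ∏ p ∈ (n + 1).primesBelow, (1 - invHom p)⁻¹ :=
    sum_le_hasSum _ (fun i _ => Set.indicator_nonneg (fun m _ => by show (0:ℝ) ≤ (m:ℝ)⁻¹; positivity) i) hs2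
  have hind : ∀ d ∈ Finset.Icc 1 n,
      Set.indicator (Nat.smoothNumbers (n+1)) (fun m => invHom m) d = (d : ℝ)⁻¹ := by
    intro d hd
    rw [Finset.mem_Icc] at hd
    have hmem : d ∈ Nat.smoothNumbers (n+1) := by
      rw [Nat.mem_smoothNumbers']
      intro p hp hpd
      have : p ≤ d := Nat.le_of_dvd (by omega) hpd
      omega
    rw [Set.indicator_of_mem hmem]
    rfl
  rw [Finset.sum_congr rfl hind] at hsum_le
  have hharm : Real.log ((n : ℝ) + 1) ≤ ∑ d ∈ Finset.Icc 1 n, (d : ℝ)⁻¹ := by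
    have := log_add_one_le_harmonic n
    rw [harmonic_eq_sum_Icc] at this
    push_cast at this ⊢
    exact this
  have hlogpos : 0 < Real.log ((n : ℝ) + 1) := by
    apply Real.log_pos
    have : (1 : ℝ) ≤ n := by exact_mod_cast hn
    linarith
  have step : Real.log ((n : ℝ) + 1) ≤ ∏ p ∈ (n + 1).primesBelow, (1 - invHom p)⁻¹ :=
    le_trans hharm hsum_le
  have hmono := Real.log_le_log hlogpos step
  refine le_trans hmono ?_
  rw [Real.log_prod]
  · apply le_of_eq
    apply Finset.sum_congr rfl
    intro p hp
    have hp2 : 2 ≤ p := (Nat.prime_of_mem_primesBelow hp).two_le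
    exact ((pw_facts hp2).2.2.2).symm
  · intro p hp
    have hp2 : 2 ≤ p := (Nat.prime_of_mem_primesBelow hp).two_le
    have hp1 : (2 : ℝ) ≤ p := by exact_mod_cast hp2
    have hpos : (0:ℝ) < 1 - (p:ℝ)⁻¹ := by
      have : (p:ℝ)⁻¹ ≤ 2⁻¹ := by
        apply inv_anti₀ <;> norm_num [hp1]
      norm_num at this ⊢
      linarith
    show (1 - invHom p)⁻¹ ≠ 0
    exact ne_of_gt (inv_pos.mpr hpos)

lemma theta_le (m : ℕ) : ∑ p ∈ m.primesBelow, Real.log p ≤ m * Real.log 4 := by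
  have h1 : ∑ p ∈ m.primesBelow, Real.log p
      = Real.log ((∏ p ∈ m.primesBelow, p : ℕ) : ℝ) := by
    rw [Nat.cast_prod, Real.log_prod]
    intro p hp
    exact_mod_cast (Nat.prime_of_mem_primesBelow hp).pos.ne'
  rw [h1]
  have h2 : (∏ p ∈ m.primesBelow, p) ≤ 4 ^ m := by
    calc (∏ p ∈ m.primesBelow, p) ≤ primorial m := by
          apply Finset.prod_le_prod_of_subset_of_one_le'
          · intro p hp
            rw [Nat.mem_primesBelow] at hp
            simp only [primorial, Finset.mem_filter, Finset.mem_range]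
            exact ⟨by omega, hp.2⟩
          · intro i hi _
            simp only [primorial, Finset.mem_filter] at hi
            exact hi.2.one_lt.le
      _ ≤ 4 ^ m := primorial_le_4_pow m
  calc Real.log ((∏ p ∈ m.primesBelow, p : ℕ) : ℝ) ≤ Real.log ((4:ℝ) ^ m) := by
        apply Real.log_le_log
        · exact_mod_cast Finset.prod_pos fun p hp => (Nat.prime_of_mem_primesBelow hp).pos
        · exact_mod_cast h2
    _ = m * Real.log 4 := by rw [Real.log_pow]

lemma sum_primes_inv_le (n : ℕ) (hn : 2 ≤ n) :
    ∑ p ∈ n.primesBelow, ((p : ℝ))⁻¹ ≤ 4 * Real.log (Real.log n) + 8 := by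
  set J := Nat.log 2 n with hJ
  have hJ1 : 1 ≤ J := Nat.log_pos one_lt_two hn
  have hmap : ∀ p ∈ n.primesBelow, Nat.log 2 p ∈ Finset.Icc 1 J := by
    intro p hp
    rw [Nat.mem_primesBelow] at hp
    rw [Finset.mem_Icc]
    constructor
    · exact Nat.log_pos one_lt_two hp.2.two_le
    · exact Nat.log_mono_right (le_of_lt hp.1)
  rw [← Finset.sum_fiberwise_of_maps_to hmap (fun p => ((p:ℝ))⁻¹)]
  have hfiber : ∀ j ∈ Finset.Icc 1 J,
      ∑ p ∈ n.primesBelow.filter (fun p => Nat.log 2 p = j), ((p:ℝ))⁻¹ ≤ 4 * ((j:ℝ))⁻¹ := by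
    intro j hj
    rw [Finset.mem_Icc] at hj
    have hjpos : (0:ℝ) < j := by exact_mod_cast hj.1
    have hc : (0:ℝ) < (j:ℝ) * Real.log 2 * 2^j :=
      mul_pos (mul_pos hjpos (Real.log_pos one_lt_two)) (by positivity)
    have hstep : ∀ p ∈ n.primesBelow.filter (fun p => Nat.log 2 p = j),
        ((p:ℝ))⁻¹ ≤ Real.log p * ((j:ℝ) * Real.log 2 * 2^j)⁻¹ := by
      intro p hp
      rw [Finset.mem_filter] at hp
      obtain ⟨hp1, hp2⟩ := hp
      have hpprime := Nat.prime_of_mem_primesBelow hp1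
      have hple : (2:ℕ)^j ≤ p := hp2 ▸ Nat.pow_log_le_self 2 hpprime.pos.ne'
      have hpleR : (2:ℝ)^j ≤ p := by exact_mod_cast hple
      have hlogp : (j:ℝ) * Real.log 2 ≤ Real.log p := by
        calc (j:ℝ) * Real.log 2 = Real.log ((2:ℝ)^j) := by rw [Real.log_pow]
          _ ≤ Real.log p := Real.log_le_log (by positivity) hpleR
      have hpinv : ((p:ℝ))⁻¹ ≤ ((2:ℝ)^j)⁻¹ :=
        inv_anti₀ (by positivity) hpleR
      calc ((p:ℝ))⁻¹ ≤ ((2:ℝ)^j)⁻¹ := hpinv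
        _ = ((j:ℝ) * Real.log 2) * ((j:ℝ) * Real.log 2 * 2^j)⁻¹ := by
            field_simp
        _ ≤ Real.log p * ((j:ℝ) * Real.log 2 * 2^j)⁻¹ := by
            apply mul_le_mul_of_nonneg_right hlogp (by positivity)
    calc ∑ p ∈ n.primesBelow.filter (fun p => Nat.log 2 p = j), ((p:ℝ))⁻¹
        ≤ ∑ p ∈ n.primesBelow.filter (fun p => Nat.log 2 p = j),
            Real.log p * ((j:ℝ) * Real.log 2 * 2^j)⁻¹ := Finset.sum_le_sum hstep
      _ = (∑ p ∈ n.primesBelow.filter (fun p => Nat.log 2 p = j), Real.log p)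
            * ((j:ℝ) * Real.log 2 * 2^j)⁻¹ := (Finset.sum_mul ..).symm
      _ ≤ ((2^(j+1) : ℕ) * Real.log 4) * ((j:ℝ) * Real.log 2 * 2^j)⁻¹ := by
          apply mul_le_mul_of_nonneg_right _ (by positivity)
          refine le_trans ?_ (theta_le (2^(j+1)))
          apply Finset.sum_le_sum_of_subset_of_nonneg
          · intro p hp
            rw [Finset.mem_filter] at hp
            obtain ⟨hp1, hp2⟩ := hp
            have hpprime := Nat.prime_of_mem_primesBelow hp1
            rw [Nat.mem_primesBelow]
            exact ⟨hp2 ▸ Nat.lt_pow_succ_log_self one_lt_two p, hpprime⟩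
          · intro p hp _
            have := (Nat.prime_of_mem_primesBelow hp).two_le
            apply Real.log_nonneg
            exact_mod_cast le_trans one_le_two (by exact_mod_cast this)
      _ = 4 * ((j:ℝ))⁻¹ := by
          have h4 : Real.log 4 = 2 * Real.log 2 := by
            rw [show (4:ℝ) = 2^2 by norm_num, Real.log_pow]; push_cast; ring
          push_cast
          rw [h4]
          have hl2 : Real.log 2 ≠ 0 := ne_of_gt (Real.log_pos one_lt_two)
          field_simp
          ring
  have htot : ∑ j ∈ Finset.Icc 1 J,
      (∑ p ∈ n.primesBelow.filter (fun p => Nat.log 2 p = j), ((p:ℝ))⁻¹)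
      ≤ ∑ j ∈ Finset.Icc 1 J, 4 * ((j:ℝ))⁻¹ := Finset.sum_le_sum hfiber
  refine le_trans htot ?_
  have hharmJ : ∑ j ∈ Finset.Icc 1 J, ((j:ℝ))⁻¹ ≤ 1 + Real.log J := by
    have := harmonic_le_one_add_log J
    rw [harmonic_eq_sum_Icc] at this
    push_cast at this
    exact this
  have hJle : (J:ℝ) ≤ 2 * Real.log n := by
    have h2J : (2:ℕ)^J ≤ n := Nat.pow_log_le_self 2 (by omega)
    have h2JR : (2:ℝ)^J ≤ n := by exact_mod_cast h2J
    have : (J:ℝ) * Real.log 2 ≤ Real.log n := by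
      calc (J:ℝ) * Real.log 2 = Real.log ((2:ℝ)^J) := by rw [Real.log_pow]
        _ ≤ Real.log n := Real.log_le_log (by positivity) h2JR
    nlinarith [Real.log_two_gt_d9, (by exact_mod_cast hJ1 : (1:ℝ) ≤ J)]
  have hlogn : 0 < Real.log n := Real.log_pos (by exact_mod_cast hn)
  have hlogJ : Real.log J ≤ Real.log 2 + Real.log (Real.log n) := by
    calc Real.log J ≤ Real.log (2 * Real.log n) :=
          Real.log_le_log (by exact_mod_cast Nat.pos_of_ne_zero (by omega)) hJle
      _ = Real.log 2 + Real.log (Real.log n) := Real.log_mul two_ne_zero (ne_of_gt hlogn)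
  calc ∑ j ∈ Finset.Icc 1 J, 4 * ((j:ℝ))⁻¹ = 4 * ∑ j ∈ Finset.Icc 1 J, ((j:ℝ))⁻¹ := by
        rw [Finset.mul_sum]
    _ ≤ 4 * (1 + Real.log J) := by linarith
    _ ≤ 4 * (1 + Real.log 2 + Real.log (Real.log n)) := by linarith
    _ ≤ 4 * Real.log (Real.log n) + 8 := by
        nlinarith [Real.log_two_lt_d9]

lemma T_upper (n : ℕ) (hn : 2 ≤ n) :
    ∑ p ∈ n.primesBelow, pw p ≤ 8 * Real.log (Real.log n) + 16 := by
  have h1 : ∑ p ∈ n.primesBelow, pw p ≤ ∑ p ∈ n.primesBelow, 2 * ((p:ℝ))⁻¹ :=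
    Finset.sum_le_sum fun p hp => (pw_facts (Nat.prime_of_mem_primesBelow hp).two_le).2.2.1
  have h2 := sum_primes_inv_le n hn
  calc ∑ p ∈ n.primesBelow, pw p ≤ ∑ p ∈ n.primesBelow, 2 * ((p:ℝ))⁻¹ := h1
    _ = 2 * ∑ p ∈ n.primesBelow, ((p:ℝ))⁻¹ := by rw [Finset.mul_sum]
    _ ≤ 2 * (4 * Real.log (Real.log n) + 8) := by linarith
    _ = 8 * Real.log (Real.log n) + 16 := by ring

lemma greedy_single {L : ℝ} (hL : 0 ≤ L) (w : ℕ → ℝ) :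
    ∀ (Q : Finset ℕ), (∀ p ∈ Q, 0 < w p ∧ w p ≤ L) → ∀ t : ℝ, 0 ≤ t →
      t ≤ ∑ p ∈ Q, w p →
      ∃ S ⊆ Q, t ≤ ∑ p ∈ S, w p ∧ ∑ p ∈ S, w p ≤ t + L := by
  intro Q
  induction Q using Finset.strongInduction with
  | _ Q ih =>
    intro hw t ht htQ
    by_cases hc : ∑ p ∈ Q, w p ≤ t + L
    · exact ⟨Q, Finset.Subset.refl Q, htQ, hc⟩
    · push_neg at hc
      have hQne : Q.Nonempty := by
        rcases Q.eq_empty_or_nonempty with h | h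
        · exfalso; rw [h, Finset.sum_empty] at hc; linarith
        · exact h
      obtain ⟨q, hq⟩ := hQne
      have h1 : ∑ p ∈ Q.erase q, w p = (∑ p ∈ Q, w p) - w q :=
        Finset.sum_erase_eq_sub hq
      have ht' : t ≤ ∑ p ∈ Q.erase q, w p := by
        have := (hw q hq).2
        rw [h1]; linarith
      obtain ⟨S, hS, h2, h3⟩ := ih (Q.erase q) (Finset.erase_ssubset hq)
        (fun p hp => hw p (Finset.mem_of_mem_erase hp)) t ht ht'
      exact ⟨S, hS.trans (Finset.erase_subset q Q), h2, h3⟩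

lemma greedy_multi {L : ℝ} (hL : 0 ≤ L) (w : ℕ → ℝ) :
    ∀ (m : ℕ) (t : Fin m → ℝ) (Q : Finset ℕ),
      (∀ p ∈ Q, 0 < w p ∧ w p ≤ L) → (∀ i, 0 ≤ t i) →
      (∑ i, t i) + m * L ≤ ∑ p ∈ Q, w p →
      ∃ P : Fin m → Finset ℕ, (∀ i, P i ⊆ Q) ∧
        (∀ i j, i ≠ j → Disjoint (P i) (P j)) ∧
        (∀ i, t i ≤ ∑ p ∈ P i, w p ∧ ∑ p ∈ P i, w p ≤ t i + L) := by
  intro m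
  induction m with
  | zero =>
    intro t Q _ _ _
    exact ⟨fun i => i.elim0, fun i => i.elim0, fun i => i.elim0, fun i => i.elim0⟩
  | succ m ih =>
    intro t Q hw ht hsum
    have hmL : 0 ≤ (m : ℝ) * L := mul_nonneg (by positivity) hL
    have hsplit : ∑ i, t i = t 0 + ∑ i : Fin m, t i.succ := Fin.sum_univ_succ t
    have htail : 0 ≤ ∑ i : Fin m, t i.succ := Finset.sum_nonneg fun i _ => ht _
    have h0 : t 0 ≤ ∑ p ∈ Q, w p := by
      have : ((m : ℝ) + 1) * L = m * L + L := by ring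
      push_cast at hsum
      nlinarith
    obtain ⟨S, hSQ, hS1, hS2⟩ := greedy_single hL w Q hw (t 0) (ht 0) h0
    have hrest : (∑ i : Fin m, t i.succ) + m * L ≤ ∑ p ∈ Q \ S, w p := by
      rw [Finset.sum_sdiff_eq_sub hSQ]
      push_cast at hsum
      linarith
    obtain ⟨P', hP'Q, hP'disj, hP'⟩ := ih (fun i => t i.succ) (Q \ S)
      (fun p hp => hw p (Finset.mem_sdiff.mp hp).1) (fun i => ht _) hrest
    refine ⟨Fin.cases S P', ?_, ?_, ?_⟩
    · intro i
      induction i using Fin.cases with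
      | zero => simpa using hSQ
      | succ i => simpa using (hP'Q i).trans (Finset.sdiff_subset)
    · have hdisjS : ∀ j : Fin m, Disjoint S (P' j) := by
        intro j
        exact Finset.disjoint_of_subset_right (hP'Q j) Finset.disjoint_sdiff
      intro i j hij
      induction i using Fin.cases with
      | zero =>
        induction j using Fin.cases with
        | zero => exact absurd rfl hij
        | succ j => simpa using hdisjS j
      | succ i =>
        induction j using Fin.cases with
        | zero => simpa using (hdisjS i).symm
        | succ j =>
          have : i ≠ j := fun h => hij (by rw [h])
          simpa using hP'disj i j this
    · intro i
      induction i using Fin.cases with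
      | zero => simpa using ⟨hS1, hS2⟩
      | succ i => simpa using hP' i

lemma tendsto_sub_8log : Filter.Tendsto (fun z : ℝ => z - 8 * Real.log z) atTop atTop := by
  refine tendsto_atTop_mono' atTop ?_ (Tendsto.atTop_div_const two_pos tendsto_id)
  filter_upwards [Real.isLittleO_log_id_atTop.bound (by norm_num : (0:ℝ) < 1/16),
    eventually_ge_atTop (0:ℝ)] with z hz hz0
  simp only [Real.norm_eq_abs, id_eq] at hz
  have h1 : Real.log z ≤ |Real.log z| := le_abs_self _
  have h2 : |z| = z := abs_of_nonneg hz0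
  rw [h2] at hz
  simp only [id_eq]
  linarith

lemma ev_cond (M : ℝ) :
    ∀ᶠ x : ℝ in atTop, 3 ≤ Real.log x ∧ Real.log x + 1 ≤ x / 2 ∧
      M + 16 + 8 * Real.log (Real.log (Real.log x + 1)) ≤ Real.log (Real.log (x / 2)) := by
  have hlog := Real.tendsto_log_atTop
  have h1 : ∀ᶠ x : ℝ in atTop, 3 ≤ Real.log x := hlog.eventually_ge_atTop 3
  have h2 : ∀ᶠ x : ℝ in atTop, Real.log x + 1 ≤ x / 2 := by
    filter_upwards [Real.isLittleO_log_id_atTop.bound (by norm_num : (0:ℝ) < 1/4),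
      eventually_ge_atTop (4:ℝ)] with x hx hx4
    simp only [Real.norm_eq_abs, id_eq] at hx
    rw [abs_of_nonneg (by linarith : (0:ℝ) ≤ x)] at hx
    have := le_abs_self (Real.log x)
    linarith
  have hmain : Tendsto (fun x : ℝ =>
      Real.log (Real.log (x / 2)) - 8 * Real.log (Real.log (Real.log x + 1))) atTop atTop := by
    have hcomp : Tendsto (fun x : ℝ =>
        (Real.log (Real.log x) - 8 * Real.log (Real.log (Real.log x))) - 7) atTop atTop := by
      have := (tendsto_atTop_add_const_right atTop (-7)
        (tendsto_sub_8log.comp (hlog.comp hlog)))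
      simpa [Function.comp, ← sub_eq_add_neg] using this
    apply tendsto_atTop_mono' atTop _ hcomp
    filter_upwards [hlog.eventually_ge_atTop 4, eventually_gt_atTop (0:ℝ)] with x hu hxpos
    set u := Real.log x with hu_def
    have hl2 : Real.log 2 < 0.6931471808 := Real.log_two_lt_d9
    have hl2' : 0 < Real.log 2 := Real.log_pos one_lt_two
    have e1 : Real.log (x / 2) = u - Real.log 2 := Real.log_div (ne_of_gt hxpos) two_ne_zero
    have e2 : u / 2 ≤ u - Real.log 2 := by linarith
    have e4 : Real.log (u / 2) = Real.log u - Real.log 2 :=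
      Real.log_div (by linarith) two_ne_zero
    have f1 : Real.log u - Real.log 2 ≤ Real.log (Real.log (x/2)) := by
      rw [e1, ← e4]
      exact Real.log_le_log (by linarith) e2
    have hu1 : Real.log (u + 1) ≤ 2 * Real.log u := by
      have hsq : u + 1 ≤ u ^ 2 := by nlinarith
      calc Real.log (u + 1) ≤ Real.log (u ^ 2) := Real.log_le_log (by linarith) hsq
        _ = 2 * Real.log u := by rw [Real.log_pow]; push_cast; ring
    have hlogu : 0 < Real.log u := Real.log_pos (by linarith)
    have f2 : Real.log (Real.log (u + 1)) ≤ Real.log 2 + Real.log (Real.log u) := by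
      calc Real.log (Real.log (u + 1)) ≤ Real.log (2 * Real.log u) :=
            Real.log_le_log (Real.log_pos (by linarith)) hu1
        _ = Real.log 2 + Real.log (Real.log u) := Real.log_mul two_ne_zero (ne_of_gt hlogu)
    show Real.log u - 8 * Real.log (Real.log u) - 7 ≤
        Real.log (Real.log (x / 2)) - 8 * Real.log (Real.log (Real.log x + 1))
    have : Real.log (Real.log x + 1) = Real.log (u + 1) := rfl
    linarith [f1, f2]
  filter_upwards [h1, h2, hmain.eventually_ge_atTop (M + 16)] with x hx1 hx2 hx3
  exact ⟨hx1, hx2, by linarith⟩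


/-- For every `k ≥ 1` and every sufficiently large `N`, there are pairwise disjoint
finite sets `P₁, …, P_k` of primes contained in `(log₄ N, ½ log₃ N]` with
`4 i log 2 ≤ log 2 + ∑_{p ∈ P_i} log (p / (p - 1)) ≤ (4 i + 1) log 2` for each
`1 ≤ i ≤ k`. -/
theorem exists_greedy_prime_sets_totient (k : ℕ) (hk : 1 ≤ k) :
    ∃ N₀ : ℕ, ∀ N : ℕ, N₀ ≤ N →
      ∃ P : Fin k → Finset ℕ,
        (∀ i j, i ≠ j → Disjoint (P i) (P j)) ∧
        (∀ i, ∀ p ∈ P i, Nat.Prime p ∧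
          Real.log (Real.log (Real.log (Real.log N))) < (p : ℝ) ∧
          (p : ℝ) ≤ Real.log (Real.log (Real.log N)) / 2) ∧
        (∀ i : Fin k,
          4 * ((i : ℕ) + 1 : ℝ) * Real.log 2 ≤
            Real.log 2 + ∑ p ∈ P i, Real.log ((p : ℝ) / ((p : ℝ) - 1)) ∧
          Real.log 2 + ∑ p ∈ P i, Real.log ((p : ℝ) / ((p : ℝ) - 1)) ≤
            (4 * ((i : ℕ) + 1 : ℝ) + 1) * Real.log 2) := by
  set L : ℝ := Real.log 2 with hLdef
  have hL : 0 < L := Real.log_pos one_lt_two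
  set M : ℝ := 5 * (k : ℝ) ^ 2 * L with hMdef
  -- threshold
  have hNx : Filter.Tendsto (fun N : ℕ => Real.log (Real.log (Real.log (N : ℝ)))) atTop atTop :=
    (Real.tendsto_log_atTop.comp (Real.tendsto_log_atTop.comp Real.tendsto_log_atTop)).comp
      tendsto_natCast_atTop_atTop
  obtain ⟨N₀, hN₀⟩ := Filter.eventually_atTop.mp (hNx.eventually (ev_cond M))
  refine ⟨N₀, fun N hN => ?_⟩
  obtain ⟨hc1, hc2, hc3⟩ := hN₀ N hN
  set x : ℝ := Real.log (Real.log (Real.log (N : ℝ))) with hxdef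
  set A : ℝ := Real.log x with hAdef
  set B : ℝ := x / 2 with hBdef
  -- basic facts
  have hA3 : 3 ≤ A := hc1
  have hA0 : 0 ≤ A := by linarith
  have hAB : A + 1 ≤ B := hc2
  have hB4 : 4 ≤ B := by linarith
  have hB0 : 0 ≤ B := by linarith
  set na : ℕ := ⌊A⌋₊ with hnadef
  set nb : ℕ := ⌊B⌋₊ with hnbdef
  have hna3 : 3 ≤ na := Nat.le_floor (by exact_mod_cast hA3)
  have hnb4 : 4 ≤ nb := Nat.le_floor (by exact_mod_cast hB4)
  have hnab : na + 1 ≤ nb := by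
    have h1 : (na + 1 : ℕ) = ⌊A + 1⌋₊ := (Nat.floor_add_one hA0).symm
    rw [h1]
    exact Nat.floor_mono hAB |>.trans (le_of_eq rfl)
  have hsubset : (na + 1).primesBelow ⊆ (nb + 1).primesBelow := by
    intro p hp
    rw [Nat.mem_primesBelow] at hp ⊢
    exact ⟨by omega, hp.2⟩
  set Q : Finset ℕ := (nb + 1).primesBelow \ (na + 1).primesBelow with hQdef
  have hQw : ∀ p ∈ Q, 0 < pw p ∧ pw p ≤ L := by
    intro p hp
    have hp2 := (Nat.prime_of_mem_primesBelow (Finset.mem_sdiff.mp hp).1).two_le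
    exact ⟨(pw_facts hp2).1, (pw_facts hp2).2.1⟩
  -- mass lower bound
  have hmass : M ≤ ∑ p ∈ Q, pw p := by
    have hsdiff : ∑ p ∈ Q, pw p
        = (∑ p ∈ (nb + 1).primesBelow, pw p) - ∑ p ∈ (na + 1).primesBelow, pw p :=
      Finset.sum_sdiff_eq_sub hsubset
    have hlow : Real.log (Real.log ((nb : ℝ) + 1)) ≤ ∑ p ∈ (nb + 1).primesBelow, pw p :=
      euler_lower nb (by omega)
    have hBle : B ≤ (nb : ℝ) + 1 := le_of_lt (Nat.lt_floor_add_one B)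
    have hlogB : 0 < Real.log B := Real.log_pos (by linarith)
    have hlow2 : Real.log (Real.log B) ≤ Real.log (Real.log ((nb : ℝ) + 1)) :=
      Real.log_le_log hlogB (Real.log_le_log (by linarith) hBle)
    have hup : ∑ p ∈ (na + 1).primesBelow, pw p
        ≤ 8 * Real.log (Real.log ((na : ℝ) + 1)) + 16 := by
      have := T_upper (na + 1) (by omega)
      convert this using 4 <;> push_cast <;> ring
    have hnaA : (na : ℝ) + 1 ≤ A + 1 := by
      have := Nat.floor_le hA0
      linarith
    have hna1 : (4:ℝ) ≤ (na : ℝ) + 1 := by exact_mod_cast by omega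
    have hup2 : Real.log (Real.log ((na : ℝ) + 1)) ≤ Real.log (Real.log (A + 1)) := by
      apply Real.log_le_log
      · exact Real.log_pos (by linarith)
      · exact Real.log_le_log (by linarith) hnaA
    have hc3' : M + 16 + 8 * Real.log (Real.log (A + 1)) ≤ Real.log (Real.log B) := hc3
    rw [hsdiff]
    linarith
  -- targets
  set t : Fin k → ℝ := fun i => (4 * ((i : ℕ) : ℝ) + 3) * L with htdef
  have ht0 : ∀ i, 0 ≤ t i := by
    intro i
    have : (0:ℝ) ≤ ((i : ℕ) : ℝ) := by positivity
    have := hL.le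
    positivity
  have hsum_t : (∑ i, t i) + k * L ≤ M := by
    have hbound : ∀ i : Fin k, t i ≤ (4 * (k : ℝ) - 1) * L := by
      intro i
      have hik : ((i : ℕ) : ℝ) ≤ (k : ℝ) - 1 := by
        have := i.isLt
        have : ((i : ℕ) : ℝ) + 1 ≤ (k : ℝ) := by exact_mod_cast i.isLt
        linarith
      have : 4 * ((i : ℕ) : ℝ) + 3 ≤ 4 * (k : ℝ) - 1 := by linarith
      exact mul_le_mul_of_nonneg_right this hL.le
    have hsum : ∑ i, t i ≤ (k : ℝ) * ((4 * (k : ℝ) - 1) * L) := by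
      calc ∑ i, t i ≤ ∑ _i : Fin k, (4 * (k : ℝ) - 1) * L := Finset.sum_le_sum fun i _ => hbound i
        _ = (k : ℝ) * ((4 * (k : ℝ) - 1) * L) := by
            rw [Finset.sum_const, Finset.card_univ, Fintype.card_fin]
            push_cast
            ring
    have hk1 : (1:ℝ) ≤ (k : ℝ) := by exact_mod_cast hk
    rw [hMdef]
    nlinarith
  obtain ⟨P, hPQ, hPdisj, hPsum⟩ := greedy_multi hL.le pw k t Q hQw ht0 (hsum_t.trans hmass)
  refine ⟨P, hPdisj, ?_, ?_⟩
  · intro i p hp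
    have hpQ := hPQ i hp
    rw [hQdef, Finset.mem_sdiff] at hpQ
    obtain ⟨hp1, hp2⟩ := hpQ
    have hpprime := Nat.prime_of_mem_primesBelow hp1
    refine ⟨hpprime, ?_, ?_⟩
    · -- A < p
      have : ¬ (p < na + 1) := fun h => hp2 (Nat.mem_primesBelow.mpr ⟨h, hpprime⟩)
      have hge : na + 1 ≤ p := by omega
      have : A < (na : ℝ) + 1 := Nat.lt_floor_add_one A
      have hgeR : ((na : ℝ) + 1) ≤ (p : ℝ) := by exact_mod_cast hge
      calc Real.log (Real.log (Real.log (Real.log (N:ℝ)))) = A := rfl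
        _ < (p : ℝ) := by linarith
    · -- p ≤ B
      have hlt : p < nb + 1 := Nat.lt_of_mem_primesBelow hp1
      have : (p : ℝ) ≤ (nb : ℝ) := by exact_mod_cast Nat.lt_succ_iff.mp hlt
      have hfl : (nb : ℝ) ≤ B := Nat.floor_le hB0
      calc (p : ℝ) ≤ (nb : ℝ) := this
        _ ≤ Real.log (Real.log (Real.log (N:ℝ))) / 2 := hfl
  · intro i
    obtain ⟨hlo0, hhi0⟩ := hPsum i
    have hlo : (4 * ((i : ℕ) : ℝ) + 3) * L ≤ ∑ p ∈ P i, pw p := hlo0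
    have hhi : ∑ p ∈ P i, pw p ≤ (4 * ((i : ℕ) : ℝ) + 3) * L + L := hhi0
    have hsum_eq : ∑ p ∈ P i, Real.log ((p : ℝ) / ((p : ℝ) - 1)) = ∑ p ∈ P i, pw p := rfl
    rw [hsum_eq]
    constructor
    · have : 4 * (((i : ℕ) : ℝ) + 1) * L = (4 * ((i : ℕ) : ℝ) + 3) * L + L := by ring
      rw [this]
      linarith
    · have : (4 * (((i : ℕ) : ℝ) + 1) + 1) * L = ((4 * ((i : ℕ) : ℝ) + 3) * L + L) + L := by ring
      rw [this]
      linarith
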